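/- Fix a factor index i with 1 ≤ i ≤ m−1, and assume every block is nonempty (no column of X_m is zero, so R_m = X_mᵀ X_m is an invertible diagonal matrix). Then Yᵀ P_U Y = Yᵀ P_W Y for every Y ∈ ℝⁿ (i.e. SS_{i;all} = SS_{i;m} identically, equivalently P_U = P_W) if and only if X_iᵀ (I − P_m) X_j = 0 for every j ≠ i with 1 ≤ j ≤ m−1, i.e. N_{ij} = N_{im} R_m^{-1} N_{jm}ᵀ for all such j, where N_{ij} = X_iᵀ X_j and N_{im} = X_iᵀ X_m. -/

import Mathlib

open Matrix

/-- The column space of a real `n × p` matrix `A`, as a subspace of Euclidean `ℝⁿ`. -/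
noncomputable def colSpace {n p : ℕ} (A : Matrix (Fin n) (Fin p) ℝ) :
    Submodule ℝ (EuclideanSpace ℝ (Fin n)) :=
  Submodule.span ℝ (Set.range fun t => (WithLp.toLp 2 (fun i => A i t) : EuclideanSpace ℝ (Fin n)))

/-- The orthogonal projection of `ℝⁿ` onto a subspace `S`, as an endomorphism. -/
noncomputable def projS {n : ℕ} (S : Submodule ℝ (EuclideanSpace ℝ (Fin n))) :
    EuclideanSpace ℝ (Fin n) →L[ℝ] EuclideanSpace ℝ (Fin n) :=
  S.subtypeL.comp (S.orthogonalProjection)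

/-- `(I − P_S)·A`: the matrix whose columns are the residuals of the columns of `A`
after orthogonal projection onto `S`. -/
noncomputable def residualMat {n p : ℕ} (S : Submodule ℝ (EuclideanSpace ℝ (Fin n)))
    (A : Matrix (Fin n) (Fin p) ℝ) : Matrix (Fin n) (Fin p) ℝ := fun i t =>
  A i t - projS S (WithLp.toLp 2 (fun i' => A i' t)) i

/-- The column space of the concatenation `X_{T**}` of all design matrices except the
`i`-th together with the all-ones column (the general mean). -/
noncomputable def spanExcept {n m : ℕ} {c : Fin (m + 1) → ℕ}
    (X : (j : Fin (m + 1)) → Matrix (Fin n) (Fin (c j)) ℝ) (i : Fin (m + 1)) :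
    Submodule ℝ (EuclideanSpace ℝ (Fin n)) :=
  (⨆ j ∈ Finset.univ.erase i, colSpace (X j)) ⊔
    Submodule.span ℝ {(WithLp.toLp 2 (fun _ => (1 : ℝ)) : EuclideanSpace ℝ (Fin n))}

/- ### Auxiliary lemmas -/

/-- The `t`-th column of a matrix, as a Euclidean vector. -/
noncomputable def colE {n p : ℕ} (A : Matrix (Fin n) (Fin p) ℝ) (t : Fin p) :
    EuclideanSpace ℝ (Fin n) := WithLp.toLp 2 (fun r => A r t)

lemma col_mem_colSpace {n p : ℕ} (A : Matrix (Fin n) (Fin p) ℝ) (t : Fin p) :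
    colE A t ∈ colSpace A :=
  Submodule.subset_span ⟨t, rfl⟩

lemma mulVec_mem_colSpace {n p : ℕ} (A : Matrix (Fin n) (Fin p) ℝ) (v : Fin p → ℝ) :
    (WithLp.toLp 2 (fun r => A.mulVec v r) : EuclideanSpace ℝ (Fin n)) ∈ colSpace A := by
  have : (WithLp.toLp 2 (fun r => A.mulVec v r) : EuclideanSpace ℝ (Fin n))
      = ∑ t, v t • (WithLp.toLp 2 (fun r => A r t) : EuclideanSpace ℝ (Fin n)) := by
    ext r
    simp only [Matrix.mulVec, dotProduct]
    rw [WithLp.ofLp_sum, Finset.sum_apply]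
    simp [mul_comm]
  rw [this]
  exact Submodule.sum_mem _ fun t _ =>
    Submodule.smul_mem _ _ (col_mem_colSpace A t)

lemma projS_eq_of {n : ℕ} {S : Submodule ℝ (EuclideanSpace ℝ (Fin n))}
    {v w : EuclideanSpace ℝ (Fin n)} (hw : w ∈ S) (ho : v - w ∈ Sᗮ) :
    projS S v = w :=
  Submodule.eq_starProjection_of_mem_orthogonal hw ho

lemma sub_projS_mem_orthogonal {n : ℕ} (S : Submodule ℝ (EuclideanSpace ℝ (Fin n)))
    (v : EuclideanSpace ℝ (Fin n)) : v - projS S v ∈ Sᗮ :=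
  Submodule.sub_starProjection_mem_orthogonal v

lemma projS_mem {n : ℕ} (S : Submodule ℝ (EuclideanSpace ℝ (Fin n)))
    (v : EuclideanSpace ℝ (Fin n)) : projS S v ∈ S :=
  (S.orthogonalProjection v).2

lemma projS_of_mem {n : ℕ} {S : Submodule ℝ (EuclideanSpace ℝ (Fin n))}
    {v : EuclideanSpace ℝ (Fin n)} (hv : v ∈ S) : projS S v = v := by
  exact projS_eq_of hv (by simp)

lemma inner_projS_self {n : ℕ} (S : Submodule ℝ (EuclideanSpace ℝ (Fin n)))
    (Y : EuclideanSpace ℝ (Fin n)) :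
    (inner ℝ Y (projS S Y) : ℝ) = ‖projS S Y‖ ^ 2 := by
  have h : (inner ℝ (projS S Y) (Y - projS S Y) : ℝ) = 0 :=
    (sub_projS_mem_orthogonal S Y) (projS S Y) (projS_mem S Y)
  rw [inner_sub_right] at h
  rw [← real_inner_self_eq_norm_sq, real_inner_comm]
  linarith [h]

lemma mem_of_inner_projS_eq {n : ℕ} (S : Submodule ℝ (EuclideanSpace ℝ (Fin n)))
    (Y : EuclideanSpace ℝ (Fin n))
    (h : (inner ℝ Y (projS S Y) : ℝ) = (inner ℝ Y Y : ℝ)) : Y ∈ S := by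
  have hd : ‖Y‖^2 = ‖(projS S Y : EuclideanSpace ℝ (Fin n))‖^2 + ‖Y - projS S Y‖^2 := by
    have horth : (inner ℝ (projS S Y : EuclideanSpace ℝ (Fin n)) (Y - projS S Y) : ℝ) = 0 :=
      (sub_projS_mem_orthogonal S Y) (projS S Y) (projS_mem S Y)
    have := norm_add_sq_real (projS S Y : EuclideanSpace ℝ (Fin n)) (Y - projS S Y)
    simpa [horth] using this
  rw [inner_projS_self, real_inner_self_eq_norm_sq] at h
  have : ‖Y - projS S Y‖^2 = 0 := by linarith
  have : Y - projS S Y = 0 := by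
    have := pow_eq_zero_iff (n := 2) (by norm_num) |>.mp this
    exact norm_eq_zero.mp this
  have hY : Y = projS S Y := sub_eq_zero.mp this
  rw [hY]; exact projS_mem S Y

lemma inner_euclidean {n : ℕ} (x y : EuclideanSpace ℝ (Fin n)) :
    (inner ℝ x y : ℝ) = ∑ r, x r * y r := by
  simp [PiLp.inner_apply, RCLike.inner_apply, mul_comm]

lemma inner_col_col {n p q : ℕ} (A : Matrix (Fin n) (Fin p) ℝ)
    (B : Matrix (Fin n) (Fin q) ℝ) (s : Fin p) (t : Fin q) :
    (inner ℝ (colE A s) (colE B t) : ℝ) = (Aᵀ * B) s t := by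
  rw [inner_euclidean]
  simp [colE, Matrix.mul_apply]

lemma mem_orthogonal_span_of_forall {n : ℕ} {s : Set (EuclideanSpace ℝ (Fin n))}
    {x : EuclideanSpace ℝ (Fin n)} (h : ∀ y ∈ s, (inner ℝ y x : ℝ) = 0) :
    x ∈ (Submodule.span ℝ s)ᗮ := by
  rw [Submodule.mem_orthogonal]
  intro u hu
  induction hu using Submodule.span_induction with
  | mem y hy => exact h y hy
  | zero => simp
  | add a b _ _ ha hb => rw [inner_add_left, ha, hb, add_zero]
  | smul r a _ ha => rw [inner_smul_left, ha, mul_zero]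

lemma mem_orthogonal_colSpace_of_forall {n p : ℕ} (A : Matrix (Fin n) (Fin p) ℝ)
    {x : EuclideanSpace ℝ (Fin n)}
    (h : ∀ t, (inner ℝ (colE A t) x : ℝ) = 0) :
    x ∈ (colSpace A)ᗮ :=
  mem_orthogonal_span_of_forall (by rintro y ⟨t, rfl⟩; exact h t)

lemma residual_col {n p : ℕ} (S : Submodule ℝ (EuclideanSpace ℝ (Fin n)))
    (A : Matrix (Fin n) (Fin p) ℝ) (s : Fin p) :
    colE (residualMat S A) s = colE A s - projS S (colE A s) := by
  ext r
  simp only [colE, residualMat, PiLp.sub_apply]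

lemma colSpace_residual_le_orthogonal {n p : ℕ} (S : Submodule ℝ (EuclideanSpace ℝ (Fin n)))
    (A : Matrix (Fin n) (Fin p) ℝ) : colSpace (residualMat S A) ≤ Sᗮ := by
  apply Submodule.span_le.mpr
  rintro y ⟨t, rfl⟩
  show colE (residualMat S A) t ∈ (Sᗮ : Submodule ℝ (EuclideanSpace ℝ (Fin n)))
  rw [residual_col]
  exact sub_projS_mem_orthogonal S (colE A t)

lemma mem_orthogonal_sup {n : ℕ} {K K' : Submodule ℝ (EuclideanSpace ℝ (Fin n))}
    {v : EuclideanSpace ℝ (Fin n)} (h1 : v ∈ Kᗮ) (h2 : v ∈ K'ᗮ) : v ∈ (K ⊔ K')ᗮ := by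
  rw [Submodule.mem_orthogonal]
  intro u hu
  rcases Submodule.mem_sup.mp hu with ⟨a, ha, b, hb, rfl⟩
  rw [inner_add_left, (Submodule.mem_orthogonal _ _).mp h1 a ha,
    (Submodule.mem_orthogonal _ _).mp h2 b hb, add_zero]

lemma le_orthogonal_span_singleton {n : ℕ} {K : Submodule ℝ (EuclideanSpace ℝ (Fin n))}
    {v : EuclideanSpace ℝ (Fin n)} (hv : v ∈ Kᗮ) :
    K ≤ (Submodule.span ℝ {v})ᗮ := by
  intro u hu
  apply mem_orthogonal_span_of_forall
  intro y hy
  rw [Set.mem_singleton_iff] at hy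
  subst hy
  exact Submodule.inner_left_of_mem_orthogonal hu hv

lemma mem_orthogonal_of_le_span {n : ℕ} {K : Submodule ℝ (EuclideanSpace ℝ (Fin n))}
    {v : EuclideanSpace ℝ (Fin n)} (h : K ≤ (Submodule.span ℝ {v})ᗮ) : v ∈ Kᗮ := by
  rw [Submodule.mem_orthogonal]
  intro u hu
  have h2 := (Submodule.mem_orthogonal _ _).mp (h hu) v (Submodule.mem_span_singleton_self v)
  rw [real_inner_comm]
  exact h2

lemma mem_orthogonal_biSup {n : ℕ} {ι : Type*} {s : Finset ι}
    {C : ι → Submodule ℝ (EuclideanSpace ℝ (Fin n))} {v : EuclideanSpace ℝ (Fin n)}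
    (h : ∀ j ∈ s, v ∈ (C j)ᗮ) : v ∈ (⨆ j ∈ s, C j)ᗮ :=
  mem_orthogonal_of_le_span
    (iSup_le fun j => iSup_le fun hj => le_orthogonal_span_singleton (h j hj))

lemma projS_colSpace_hat {n p : ℕ} (A : Matrix (Fin n) (Fin p) ℝ)
    (D : Matrix (Fin p) (Fin p) ℝ) (h1 : Aᵀ * A * D = 1)
    (v : EuclideanSpace ℝ (Fin n)) :
    projS (colSpace A) v = (WithLp.toLp 2 (fun r => (A * D * Aᵀ).mulVec v r) : EuclideanSpace ℝ (Fin n)) := by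
  apply projS_eq_of
  · have : (WithLp.toLp 2 (fun r => (A * D * Aᵀ).mulVec v r) : EuclideanSpace ℝ (Fin n))
        = (WithLp.toLp 2 (fun r => A.mulVec ((D * Aᵀ).mulVec v) r) : EuclideanSpace ℝ (Fin n)) := by
      ext r
      rw [Matrix.mul_assoc, ← Matrix.mulVec_mulVec]
    rw [this]
    exact mulVec_mem_colSpace A _
  · apply mem_orthogonal_span_of_forall
    rintro y ⟨t, rfl⟩
    rw [inner_euclidean]
    have hAM : Aᵀ * (A * D * Aᵀ) = Aᵀ := by
      rw [← Matrix.mul_assoc, ← Matrix.mul_assoc, h1, Matrix.one_mul]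
    have key : ∑ r, A r t * ((A * D * Aᵀ).mulVec v) r
        = ∑ r', (Aᵀ * (A * D * Aᵀ)) t r' * v r' := by
      simp only [Matrix.mulVec, dotProduct, Matrix.mul_apply, Finset.mul_sum,
        Finset.sum_mul, Matrix.transpose_apply]
      rw [Finset.sum_comm]
      refine Finset.sum_congr rfl fun r' _ => Finset.sum_congr rfl fun r _ =>
        Finset.sum_congr rfl fun a _ => Finset.sum_congr rfl fun b _ => by ring
    simp only [PiLp.sub_apply, mul_sub, Finset.sum_sub_distrib]
    rw [key, hAM]
    simp [Matrix.transpose_apply, mul_comm]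

/-- For a blocked main-effect plan with design matrices `X j` (the factor `Fin.last m`
being the block factor, with every block nonempty) and a treatment factor `i`, the
adjusted sum of squares `SS_{i;all} = Yᵀ P_U Y` (with `U = (I − P_{T**}) X_i`) coincides
with the block-adjusted sum of squares `SS_{i;m} = Yᵀ P_W Y` (with
`W = (I − P_m) X_i`) for every `Y` if and only if
`N_{ij} = N_{im} R_m⁻¹ N_{jm}ᵀ` for every treatment factor `j ≠ i`, where
`N_{ij} = X_iᵀ X_j` and `R_m = X_mᵀ X_m` (equivalently `X_iᵀ (I − P_m) X_j = 0`). -/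
theorem ss_all_eq_ss_block_iff_otb {n m : ℕ} {c : Fin (m + 1) → ℕ}
    (X : (j : Fin (m + 1)) → Matrix (Fin n) (Fin (c j)) ℝ)
    (hX01 : ∀ j r t, X j r t = 0 ∨ X j r t = 1)
    (hXrow : ∀ j r, ∑ t, X j r t = 1)
    (hn : 0 < n)
    (hblock : ∀ t, ∃ r, X (Fin.last m) r t ≠ 0)
    (i : Fin (m + 1)) (hi : i ≠ Fin.last m) :
    (∀ Y : EuclideanSpace ℝ (Fin n),
        (inner ℝ Y (projS (colSpace (residualMat (spanExcept X i) (X i))) Y) : ℝ) =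
          (inner ℝ Y (projS (colSpace (residualMat
            (colSpace (X (Fin.last m))) (X i))) Y) : ℝ)) ↔
      ∀ j : Fin (m + 1), j ≠ i → j ≠ Fin.last m →
        (X i)ᵀ * X j =
          ((X i)ᵀ * X (Fin.last m)) * ((X (Fin.last m))ᵀ * X (Fin.last m))⁻¹ *
            ((X j)ᵀ * X (Fin.last m))ᵀ := by
  -- notation
  have hXnn : ∀ j r t, (0:ℝ) ≤ X j r t := fun j r t => by
    rcases hX01 j r t with h | h <;> rw [h] <;> norm_num
  -- the Gram matrix of the block factor is diagonal with positive entries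
  have hRdiag : (X (Fin.last m))ᵀ * X (Fin.last m)
      = Matrix.diagonal (fun t => ((X (Fin.last m))ᵀ * X (Fin.last m)) t t) := by
    ext s t
    by_cases hst : s = t
    · subst hst; simp
    · rw [Matrix.diagonal_apply_ne _ hst, Matrix.mul_apply]
      apply Finset.sum_eq_zero
      intro r _
      rw [Matrix.transpose_apply]
      rcases hX01 (Fin.last m) r s with h | h
      · rw [h, zero_mul]
      rcases hX01 (Fin.last m) r t with h' | h'
      · rw [h', mul_zero]
      exfalso
      have hsub : ∑ u ∈ ({s, t} : Finset _), X (Fin.last m) r u ≤ ∑ u, X (Fin.last m) r u :=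
        Finset.sum_le_sum_of_subset_of_nonneg (Finset.subset_univ _)
          (fun u _ _ => hXnn _ r u)
      rw [Finset.sum_pair hst, h, h', hXrow] at hsub
      linarith
  have hdpos : ∀ t, (0:ℝ) < ((X (Fin.last m))ᵀ * X (Fin.last m)) t t := by
    intro t
    rw [Matrix.mul_apply]
    obtain ⟨r₀, hr₀⟩ := hblock t
    refine Finset.sum_pos' (fun r _ => ?_) ⟨r₀, Finset.mem_univ r₀, ?_⟩
    · rw [Matrix.transpose_apply]; exact mul_self_nonneg _
    · rw [Matrix.transpose_apply]
      rcases hX01 (Fin.last m) r₀ t with h | h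
      · exact absurd h hr₀
      · rw [h]; norm_num
  set D : Matrix (Fin (c (Fin.last m))) (Fin (c (Fin.last m))) ℝ :=
    Matrix.diagonal (fun t => (((X (Fin.last m))ᵀ * X (Fin.last m)) t t)⁻¹) with hD
  have hRD : ((X (Fin.last m))ᵀ * X (Fin.last m)) * D = 1 := by
    rw [hD]
    nth_rewrite 1 [hRdiag]
    rw [Matrix.diagonal_mul_diagonal]
    have hfun : (fun t => ((X (Fin.last m))ᵀ * X (Fin.last m)) t t *
        ((((X (Fin.last m))ᵀ * X (Fin.last m))) t t)⁻¹) = fun _ => (1:ℝ) :=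
      funext fun t => mul_inv_cancel₀ (hdpos t).ne'
    rw [hfun, Matrix.diagonal_one]
  have hRinv : ((X (Fin.last m))ᵀ * X (Fin.last m))⁻¹ = D :=
    Matrix.inv_eq_right_inv hRD
  -- the hat matrix
  set M : Matrix (Fin n) (Fin n) ℝ := X (Fin.last m) * D * (X (Fin.last m))ᵀ with hM
  have hMsym : Mᵀ = M := by
    rw [hM, hD]
    simp [Matrix.transpose_mul, Matrix.diagonal_transpose, Matrix.mul_assoc]
  have hproj : ∀ v : EuclideanSpace ℝ (Fin n),
      projS (colSpace (X (Fin.last m))) v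
        = (WithLp.toLp 2 (fun r => M.mulVec v r) : EuclideanSpace ℝ (Fin n)) :=
    projS_colSpace_hat (X (Fin.last m)) D hRD
  -- the residual matrix W
  have hWmat : residualMat (colSpace (X (Fin.last m))) (X i) = X i - M * X i := by
    ext r s
    show X i r s - projS (colSpace (X (Fin.last m))) (WithLp.toLp 2 (fun i' => X i i' s)) r = _
    rw [hproj]
    simp [Matrix.sub_apply, Matrix.mul_apply, Matrix.mulVec, dotProduct]
  have hWT : ∀ j : Fin (m+1), (X i - M * X i)ᵀ * X j
      = (X i)ᵀ * X j - (X i)ᵀ * M * X j := by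
    intro j
    rw [Matrix.transpose_sub, Matrix.sub_mul, Matrix.transpose_mul, hMsym]
  have hRHS : ∀ j : Fin (m+1),
      ((X i)ᵀ * X (Fin.last m)) * ((X (Fin.last m))ᵀ * X (Fin.last m))⁻¹ *
          ((X j)ᵀ * X (Fin.last m))ᵀ = (X i)ᵀ * M * X j := by
    intro j
    rw [hRinv, Matrix.transpose_mul, Matrix.transpose_transpose, hM]
    simp only [Matrix.mul_assoc]
  -- inclusions into the big space
  have hcolle : ∀ j : Fin (m+1), j ≠ i → colSpace (X j) ≤ spanExcept X i := by
    intro j hj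
    refine le_trans ?_ le_sup_left
    exact le_iSup₂ (f := fun (j : Fin (m+1)) (_ : j ∈ Finset.univ.erase i) => colSpace (X j))
      j (Finset.mem_erase.mpr ⟨hj, Finset.mem_univ j⟩)
  have hSmle : colSpace (X (Fin.last m)) ≤ spanExcept X i := hcolle _ (Ne.symm hi)
  have hones : (WithLp.toLp 2 (fun _ => (1 : ℝ)) : EuclideanSpace ℝ (Fin n)) ∈ colSpace (X (Fin.last m)) := by
    have h1 : (WithLp.toLp 2 (fun _ => (1 : ℝ)) : EuclideanSpace ℝ (Fin n))
        = (WithLp.toLp 2 (fun r => (X (Fin.last m)).mulVec (fun _ => 1) r) : EuclideanSpace ℝ (Fin n)) := by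
      ext r
      simp [Matrix.mulVec, dotProduct, hXrow (Fin.last m) r]
    rw [h1]
    exact mulVec_mem_colSpace _ _
  -- columns of W
  have hws_res : ∀ s : Fin (c i), colE (X i - M * X i) s
      = colE (X i) s - projS (colSpace (X (Fin.last m))) (colE (X i) s) := by
    intro s
    rw [← hWmat]
    exact residual_col _ _ s
  have hws_orth_Sm : ∀ s : Fin (c i),
      colE (X i - M * X i) s ∈ (colSpace (X (Fin.last m)))ᗮ := by
    intro s
    rw [hws_res s]
    exact sub_projS_mem_orthogonal _ _
  constructor
  · -- SS equality implies the combinatorial condition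
    intro H j hji hjL
    rw [hRHS j]
    have hzero : (X i - M * X i)ᵀ * X j = 0 := by
      ext s t
      have hw_in : colE (X i - M * X i) s
          ∈ colSpace (residualMat (colSpace (X (Fin.last m))) (X i)) := by
        rw [hWmat]; exact col_mem_colSpace _ s
      have h1 := H (colE (X i - M * X i) s)
      rw [projS_of_mem hw_in] at h1
      have hU : colE (X i - M * X i) s
          ∈ colSpace (residualMat (spanExcept X i) (X i)) :=
        mem_of_inner_projS_eq _ _ h1
      have hwsT : colE (X i - M * X i) s ∈ (spanExcept X i)ᗮ :=
        colSpace_residual_le_orthogonal _ _ hU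
      have hcol : colE (X j) t ∈ spanExcept X i := hcolle j hji (col_mem_colSpace _ t)
      have hz := Submodule.inner_left_of_mem_orthogonal hcol hwsT
      rw [inner_col_col] at hz
      rw [hz, Matrix.zero_apply]
    have hdiff : (X i)ᵀ * X j - (X i)ᵀ * M * X j = 0 := (hWT j).symm.trans hzero
    exact sub_eq_zero.mp hdiff
  · -- the combinatorial condition implies SS equality
    intro hN
    have hwsT : ∀ s : Fin (c i), colE (X i - M * X i) s ∈ (spanExcept X i)ᗮ := by
      intro s
      show _ ∈ ((⨆ j ∈ Finset.univ.erase i, colSpace (X j)) ⊔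
        Submodule.span ℝ {(WithLp.toLp 2 (fun _ => (1 : ℝ)) : EuclideanSpace ℝ (Fin n))})ᗮ
      apply mem_orthogonal_sup
      · apply mem_orthogonal_biSup
        intro j hj
        rcases eq_or_ne j (Fin.last m) with rfl | hjL
        · exact hws_orth_Sm s
        · have hji : j ≠ i := (Finset.mem_erase.mp hj).1
          have hz : (X i - M * X i)ᵀ * X j = 0 := by
            rw [hWT j, hN j hji hjL, hRHS j, sub_self]
          apply mem_orthogonal_colSpace_of_forall
          intro t
          rw [real_inner_comm, inner_col_col, hz, Matrix.zero_apply]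
      · apply mem_orthogonal_span_of_forall
        intro y hy
        rw [Set.mem_singleton_iff] at hy
        subst hy
        exact Submodule.inner_right_of_mem_orthogonal hones (hws_orth_Sm s)
    have hresEq : residualMat (spanExcept X i) (X i)
        = residualMat (colSpace (X (Fin.last m))) (X i) := by
      ext r s
      show X i r s - projS (spanExcept X i) (WithLp.toLp 2 (fun i' => X i i' s)) r
        = X i r s - projS (colSpace (X (Fin.last m))) (WithLp.toLp 2 (fun i' => X i i' s)) r
      have hEqP : projS (spanExcept X i) (colE (X i) s)
          = projS (colSpace (X (Fin.last m))) (colE (X i) s) := by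
        apply projS_eq_of
        · exact hSmle (projS_mem _ _)
        · rw [← hws_res s]
          exact hwsT s
      have : projS (spanExcept X i) (WithLp.toLp 2 (fun i' => X i i' s))
          = projS (colSpace (X (Fin.last m))) (WithLp.toLp 2 (fun i' => X i i' s)) := hEqP
      rw [this]
    intro Y
    rw [hresEq]
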